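/- Let ψ₁, ψ₂ : ℝ → [0,1] be smooth even functions that are identically 1 on [−1/2, 1/2] and supported in (−1/√2, 1/√2). Define ψ(x,y) = y ψ₁(x) ψ₂(y) on ℝ² ≅ C, and define Ω(x,y) = y/√(x²+y²) for (x,y) ≠ (0,0). Then there exists a constant c > 0 (depending on ψ₁, ψ₂) such that for every ζ = (100+ν, ω) ∈ ℝ² with ν² + ω² ≤ 1: |∫_{ℝ²} ψ(η) Ω(ζ − η) dη| ≥ c. In particular, although Ω has mean zero on the unit circle and ψ has integral zero over ℝ², the convolution ψ ∗ Ω does not vanish, and is bounded away from zero, on the ball of radius 1 centered at (100,0). -/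

import Mathlib

open MeasureTheory
open scoped ENNReal

set_option maxHeartbeats 1000000

noncomputable section

/-- `Ω(x,y) = y/√(x²+y²)`, homogeneous of degree `0` with mean zero on the unit circle. -/
def OmegaFn (p : ℝ × ℝ) : ℝ := p.2 / Real.sqrt (p.1 ^ 2 + p.2 ^ 2)


lemma deriv_bound (a u : ℝ) (ha : 98 ≤ a) (ha' : a ≤ 102) (hu : u^2 ≤ 4) :
    HasDerivAt (fun v : ℝ => v / Real.sqrt (a^2 + v^2))
      ((1 * Real.sqrt (a^2+u^2) - u * (2*u / (2 * Real.sqrt (a^2+u^2)))) / Real.sqrt (a^2+u^2)^2) u ∧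
    (1/120 : ℝ) ≤ (1 * Real.sqrt (a^2+u^2) - u * (2*u / (2 * Real.sqrt (a^2+u^2)))) / Real.sqrt (a^2+u^2)^2 := by
  have ha0 : (0:ℝ) < a := by linarith
  have hpos : (0:ℝ) < a^2 + u^2 := by positivity
  have hr : 0 < Real.sqrt (a^2+u^2) := Real.sqrt_pos.mpr hpos
  set r := Real.sqrt (a^2+u^2) with hrdef
  have hr2 : r^2 = a^2 + u^2 := Real.sq_sqrt hpos.le
  have hq : HasDerivAt (fun v : ℝ => a^2 + v^2) (2*u) u := by
    simpa using ((hasDerivAt_pow 2 u).const_add (a^2))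
  have hs : HasDerivAt (fun v : ℝ => Real.sqrt (a^2 + v^2)) (2*u / (2*r)) u :=
    hq.sqrt hpos.ne'
  constructor
  · exact (hasDerivAt_id u).div hs hr.ne'
  · have hr103 : r ≤ 103 := by
      nlinarith [hr2]
    rw [le_div_iff₀ (by positivity)]
    have h1 : u * (2*u/(2*r)) = u^2/r := by ring
    rw [h1]
    have h2 : 1 * r - u^2/r = a^2/r := by
      field_simp
      nlinarith [hr2]
    rw [h2, le_div_iff₀ hr]
    nlinarith [hr2, sq_nonneg u, sq_nonneg (r-100)]

lemma slope_bound (a : ℝ) (ha : 98 ≤ a) (ha' : a ≤ 102) {s t : ℝ} (hs : -2 ≤ s) (ht : t ≤ 2)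
    (hst : s ≤ t) :
    (1/120 : ℝ) * (t - s) ≤ t / Real.sqrt (a^2 + t^2) - s / Real.sqrt (a^2 + s^2) := by
  have ha0 : (0:ℝ) < a := by linarith
  rcases eq_or_lt_of_le hst with h | h
  · subst h; simp
  · have hcont : ContinuousOn (fun v : ℝ => v / Real.sqrt (a^2 + v^2)) (Set.Icc s t) := by
      apply Continuous.continuousOn
      apply continuous_id.div
      · exact (Real.continuous_sqrt.comp (by continuity))
      · intro v
        have : (0:ℝ) < a^2 + v^2 := by positivity
        exact (Real.sqrt_pos.mpr this).ne'
    obtain ⟨c, hc, hceq⟩ := exists_hasDerivAt_eq_slope (fun v : ℝ => v / Real.sqrt (a^2 + v^2))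
      (fun u => (1 * Real.sqrt (a^2+u^2) - u * (2*u / (2 * Real.sqrt (a^2+u^2)))) / Real.sqrt (a^2+u^2)^2)
      h hcont (fun u hu => (deriv_bound a u ha ha' (by
        rcases hu with ⟨h1, h2⟩
        nlinarith)).1)
    have hb := (deriv_bound a c ha ha' (by rcases hc with ⟨h1, h2⟩; nlinarith)).2
    rw [eq_div_iff (by linarith)] at hceq
    rw [← hceq]
    have : 0 ≤ t - s := by linarith
    nlinarith

lemma sqrt2_facts : (1:ℝ)/2 < 1/Real.sqrt 2 ∧ 1/Real.sqrt 2 < 1 := by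
  have h1 : (1:ℝ) < Real.sqrt 2 := by
    have := Real.sq_sqrt (by norm_num : (0:ℝ) ≤ 2)
    nlinarith [Real.sqrt_nonneg 2]
  have h2 : Real.sqrt 2 < 2 := by
    have := Real.sq_sqrt (by norm_num : (0:ℝ) ≤ 2)
    nlinarith [Real.sqrt_nonneg 2]
  constructor
  · rw [div_lt_div_iff₀ (by norm_num) (by linarith)]; linarith
  · rw [div_lt_one (by linarith)]; exact h1

lemma inner_bound (ψ₂ : ℝ → ℝ) (hcont : Continuous ψ₂)
    (h₂even : ∀ x, ψ₂ (-x) = ψ₂ x)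
    (h₂range : ∀ x, 0 ≤ ψ₂ x ∧ ψ₂ x ≤ 1)
    (h₂one : ∀ x ∈ Set.Icc (-(1/2) : ℝ) (1/2), ψ₂ x = 1)
    (h₂supp : ∀ x : ℝ, x ∉ Set.Ioo (-(1/Real.sqrt 2)) (1/Real.sqrt 2) → ψ₂ x = 0)
    (a ω : ℝ) (ha : 98 ≤ a) (ha' : a ≤ 102) (hω : |ω| ≤ 1) :
    ∫ y : ℝ, y * ψ₂ y * ((ω - y) / Real.sqrt (a^2 + (ω-y)^2)) ≤ -(1/1440 : ℝ) := by
  have ha0 : (0:ℝ) < a := by linarith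
  obtain ⟨hs1, hs2⟩ := sqrt2_facts
  set f : ℝ → ℝ := fun t => t / Real.sqrt (a^2 + t^2) with hf
  set g : ℝ → ℝ := fun y => y * ψ₂ y * f (ω - y) with hg
  -- continuity and compact support of g
  have hfc : Continuous f := by
    apply continuous_id.div
    · exact (Real.continuous_sqrt.comp (by continuity))
    · intro v
      have : (0:ℝ) < a^2 + v^2 := by positivity
      exact (Real.sqrt_pos.mpr this).ne'
  have hgc : Continuous g := by
    apply Continuous.mul
    · exact continuous_id.mul hcont
    · exact hfc.comp (continuous_const.sub continuous_id)
  have hgs : HasCompactSupport g := by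
    apply HasCompactSupport.intro (isCompact_Icc (a := (-1:ℝ)) (b := 1))
    intro y hy
    have : ψ₂ y = 0 := by
      apply h₂supp
      intro ⟨hl, hr⟩
      simp only [Set.mem_Icc, not_and_or, not_le] at hy
      rcases hy with h | h <;> nlinarith
    simp [hg, this]
  have hgi : Integrable g := hgc.integrable_of_hasCompactSupport hgs
  have hgni : Integrable (fun y => g (-y)) := hgi.comp_neg
  -- symmetrization
  have hsym : ∫ y, g y = (1/2) * ∫ y, (g y + g (-y)) := by
    rw [integral_add hgi hgni, integral_neg_eq_self g]
    ring
  -- pointwise bound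
  set h : ℝ → ℝ := Set.indicator (Set.Icc (-(1/2):ℝ) (1/2)) (fun y => -(y^2/60)) with hh
  have hpt : ∀ y, g y + g (-y) ≤ h y := by
    intro y
    have hωy : ∀ z : ℝ, |z| ≤ 1 → y * (f (ω - z) - f (ω + z)) ≤ 0 ∨ True := fun _ _ => Or.inr trivial
    have key : ∀ z : ℝ, |z| ≤ 1 → z * (f (ω - z) - f (ω + z)) ≤ -(z^2/60) := by
      intro z hz
      rcases le_or_gt 0 z with hz0 | hz0
      · have := slope_bound a ha ha' (s := ω - z) (t := ω + z)
          (by rw [abs_le] at hω hz; linarith) (by rw [abs_le] at hω hz; linarith) (by linarith)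
        simp only [hf]
        nlinarith
      · have := slope_bound a ha ha' (s := ω + z) (t := ω - z)
          (by rw [abs_le] at hω hz; linarith) (by rw [abs_le] at hω hz; linarith) (by linarith)
        simp only [hf]
        nlinarith
    have hsum : g y + g (-y) = ψ₂ y * (y * (f (ω - y) - f (ω + y))) := by
      simp only [hg, h₂even y]
      ring_nf
    rcases le_or_gt (|y|) (1/2) with hy | hy
    · -- ψ₂ y = 1
      have h1 : ψ₂ y = 1 := h₂one y (by rw [abs_le] at hy; exact ⟨by linarith [hy.1], hy.2⟩)
      have h2 : h y = -(y^2/60) := by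
        rw [hh, Set.indicator_of_mem]
        rw [abs_le] at hy
        exact ⟨by linarith [hy.1], hy.2⟩
      rw [hsum, h1, h2, one_mul]
      exact key y (by rw [abs_le] at hy ⊢; constructor <;> linarith [hy.1, hy.2])
    · have h2 : h y = 0 := by
        rw [hh, Set.indicator_of_notMem]
        intro hmem
        exact absurd (abs_le.mpr (Set.mem_Icc.mp hmem)) (not_le.mpr hy)
      rw [h2, hsum]
      rcases le_or_gt (1/Real.sqrt 2) (|y|) with hy2 | hy2
      · have h0 : ψ₂ y = 0 := by
          apply h₂supp
          intro hmem
          rw [Set.mem_Ioo] at hmem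
          exact absurd (abs_lt.mpr hmem) (not_lt.mpr hy2)
        rw [h0, zero_mul]
      · have hy1 : |y| ≤ 1 := by linarith
        have := key y hy1
        have hψ := (h₂range y).1
        nlinarith [sq_nonneg y]
  -- integrate the pointwise bound
  have hhint : Integrable h := by
    rw [hh, integrable_indicator_iff measurableSet_Icc]
    exact (Continuous.continuousOn (((continuous_pow 2).div_const 60).neg)).integrableOn_Icc
  have hmono : ∫ y, (g y + g (-y)) ≤ ∫ y, h y :=
    integral_mono (hgi.add hgni) hhint hpt
  have hcomp : ∫ y, h y = -(1/720 : ℝ) := by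
    rw [hh, integral_indicator measurableSet_Icc, integral_Icc_eq_integral_Ioc,
      ← intervalIntegral.integral_of_le (by norm_num : (-(1/2):ℝ) ≤ 1/2)]
    simp only [intervalIntegral.integral_neg, intervalIntegral.integral_div,
      integral_pow]
    norm_num
  calc ∫ y, g y = (1/2) * ∫ y, (g y + g (-y)) := hsym
    _ ≤ (1/2) * -(1/720) := by linarith [hmono, hcomp ▸ hmono]
    _ = -(1/1440) := by norm_num


/-- **Failure of joint cancellation**:  for smooth even cutoffs `ψ₁, ψ₂` that are `1` on
`[-1/2,1/2]` and supported in `(-1/√2, 1/√2)`, setting `ψ(x,y) = y ψ₁(x) ψ₂(y)`, the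
convolution `ψ ∗ Ω` is bounded away from zero on the unit ball centered at `(100,0)`:
there is `c > 0` with `|∫ ψ(η) Ω(ζ-η) dη| ≥ c` for all `ζ = (100+ν, ω)`, `ν²+ω² ≤ 1` —
even though `∫ ψ = 0` and `Ω` has mean zero on the unit circle. -/
theorem convolution_bounded_below (ψ₁ ψ₂ : ℝ → ℝ)
    (h₁smooth : ContDiff ℝ (⊤ : ℕ∞) ψ₁) (h₂smooth : ContDiff ℝ (⊤ : ℕ∞) ψ₂)
    (h₁even : ∀ x, ψ₁ (-x) = ψ₁ x) (h₂even : ∀ x, ψ₂ (-x) = ψ₂ x)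
    (h₁range : ∀ x, 0 ≤ ψ₁ x ∧ ψ₁ x ≤ 1) (h₂range : ∀ x, 0 ≤ ψ₂ x ∧ ψ₂ x ≤ 1)
    (h₁one : ∀ x ∈ Set.Icc (-(1/2) : ℝ) (1/2), ψ₁ x = 1)
    (h₂one : ∀ x ∈ Set.Icc (-(1/2) : ℝ) (1/2), ψ₂ x = 1)
    (h₁supp : ∀ x : ℝ, x ∉ Set.Ioo (-(1/Real.sqrt 2)) (1/Real.sqrt 2) → ψ₁ x = 0)
    (h₂supp : ∀ x : ℝ, x ∉ Set.Ioo (-(1/Real.sqrt 2)) (1/Real.sqrt 2) → ψ₂ x = 0) :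
    ∃ c : ℝ, 0 < c ∧ ∀ ν ω : ℝ, ν ^ 2 + ω ^ 2 ≤ 1 →
      c ≤ |∫ η : ℝ × ℝ,
              (η.2 * ψ₁ η.1 * ψ₂ η.2) * OmegaFn (100 + ν - η.1, ω - η.2)| := by
  obtain ⟨hs1, hs2⟩ := sqrt2_facts
  refine ⟨1/1440, by norm_num, fun ν ω hνω => ?_⟩
  have hν : |ν| ≤ 1 := abs_le.mpr ⟨by nlinarith, by nlinarith⟩
  have hω : |ω| ≤ 1 := abs_le.mpr ⟨by nlinarith, by nlinarith⟩
  set G : ℝ × ℝ → ℝ := fun η =>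
    (η.2 * ψ₁ η.1 * ψ₂ η.2) * ((ω - η.2) / Real.sqrt ((100 + ν - η.1)^2 + (ω - η.2)^2))
    with hG
  have hGeq : ∀ η : ℝ × ℝ,
      (η.2 * ψ₁ η.1 * ψ₂ η.2) * OmegaFn (100 + ν - η.1, ω - η.2) = G η := fun η => rfl
  -- continuity of G
  have hGc : Continuous G := by
    rw [continuous_iff_continuousAt]
    intro η
    by_cases hcase : η.1 ≤ 2
    · have hpos : (0:ℝ) < (100 + ν - η.1)^2 + (ω - η.2)^2 := by
        have : (97:ℝ) ≤ 100 + ν - η.1 := by rw [abs_le] at hν; linarith [hν.1]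
        nlinarith
      apply ContinuousAt.mul
      · exact (Continuous.continuousAt (by
          exact (continuous_snd.mul ((h₁smooth.continuous).comp continuous_fst)).mul
            ((h₂smooth.continuous).comp continuous_snd)))
      · apply ContinuousAt.div
        · exact (continuous_const.sub continuous_snd).continuousAt
        · exact (Real.continuous_sqrt.comp (by continuity)).continuousAt
        · exact (Real.sqrt_pos.mpr hpos).ne'
    · have hev : {x : ℝ × ℝ | 1 < x.1} ∈ nhds η :=
        (isOpen_lt continuous_const continuous_fst).mem_nhds (by
          simp only [Set.mem_setOf_eq]; linarith [not_le.mp hcase])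
      apply ContinuousAt.congr (continuousAt_const (y := (0:ℝ)))
      filter_upwards [hev] with x hx
      have : ψ₁ x.1 = 0 := h₁supp _ (by
        intro hmem
        rw [Set.mem_Ioo] at hmem
        linarith [hmem.2])
      simp [hG, this]
  -- compact support of G
  have hGs : HasCompactSupport G := by
    apply HasCompactSupport.intro
      ((isCompact_Icc (a := (-1:ℝ)) (b := 1)).prod (isCompact_Icc (a := (-1:ℝ)) (b := 1)))
    intro η hη
    rw [Set.mem_prod, not_and_or] at hη
    rcases hη with h | h
    · have : ψ₁ η.1 = 0 := h₁supp _ (by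
        intro hmem
        rw [Set.mem_Ioo] at hmem
        rw [Set.mem_Icc, not_and_or, not_le, not_le] at h
        rcases h with h | h <;> nlinarith [hmem.1, hmem.2])
      simp [hG, this]
    · have : ψ₂ η.2 = 0 := h₂supp _ (by
        intro hmem
        rw [Set.mem_Ioo] at hmem
        rw [Set.mem_Icc, not_and_or, not_le, not_le] at h
        rcases h with h | h <;> nlinarith [hmem.1, hmem.2])
      simp [hG, this]
  have hGi : Integrable G (volume : Measure (ℝ × ℝ)) :=
    hGc.integrable_of_hasCompactSupport hGs
  have hGi' : Integrable G ((volume : Measure ℝ).prod (volume : Measure ℝ)) := by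
    rwa [← Measure.volume_eq_prod]
  -- Fubini
  have hFub : ∫ η : ℝ × ℝ, G η = ∫ x : ℝ, ∫ y : ℝ, G (x, y) := by
    rw [Measure.volume_eq_prod, integral_prod G hGi']
  set J : ℝ → ℝ := fun x => ∫ y : ℝ, G (x, y) with hJ
  have hJi : Integrable J := hGi'.integral_prod_left
  -- inner bound
  have hJb : ∀ x : ℝ, J x ≤ Set.indicator (Set.Icc (-(1/2):ℝ) (1/2))
      (fun _ => -(1/1440 : ℝ)) x := by
    intro x
    have hJx : J x = ψ₁ x * ∫ y : ℝ,
        y * ψ₂ y * ((ω - y) / Real.sqrt ((100 + ν - x)^2 + (ω - y)^2)) := by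
      rw [hJ]
      simp only
      rw [← integral_const_mul]
      congr 1
      funext y
      simp only [hG]
      ring
    by_cases hx : |x| < 1/Real.sqrt 2
    · have hx1 : |x| ≤ 1 := by linarith
      have hK := inner_bound ψ₂ h₂smooth.continuous h₂even h₂range h₂one h₂supp
        (100 + ν - x) ω (by rw [abs_le] at hν hx1; linarith [hν.1, hx1.2])
        (by rw [abs_le] at hν hx1; linarith [hν.2, hx1.1]) hω
      by_cases hmem : x ∈ Set.Icc (-(1/2):ℝ) (1/2)
      · rw [Set.indicator_of_mem hmem, hJx, h₁one x hmem, one_mul]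
        exact hK
      · rw [Set.indicator_of_notMem hmem, hJx]
        exact mul_nonpos_of_nonneg_of_nonpos (h₁range x).1 (by linarith)
    · have h0 : ψ₁ x = 0 := h₁supp _ (by
        intro hmem
        rw [Set.mem_Ioo] at hmem
        exact absurd (abs_lt.mpr hmem) hx)
      have hmem : x ∉ Set.Icc (-(1/2):ℝ) (1/2) := by
        intro hmem
        rw [Set.mem_Icc] at hmem
        exact hx (lt_of_le_of_lt (abs_le.mpr hmem) hs1)
      rw [Set.indicator_of_notMem hmem, hJx, h0, zero_mul]
  -- integrate
  have hindi : Integrable (Set.indicator (Set.Icc (-(1/2):ℝ) (1/2))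
      (fun _ => -(1/1440 : ℝ))) := by
    rw [integrable_indicator_iff measurableSet_Icc]
    exact (integrableOn_const_iff).mpr (Or.inr (by rw [Real.volume_Icc]; exact ENNReal.ofReal_lt_top))
  have hmono : ∫ x, J x ≤ ∫ x, Set.indicator (Set.Icc (-(1/2):ℝ) (1/2))
      (fun _ => -(1/1440 : ℝ)) x := integral_mono hJi hindi hJb
  have hindval : ∫ x, Set.indicator (Set.Icc (-(1/2):ℝ) (1/2))
      (fun _ => -(1/1440 : ℝ)) x = -(1/1440 : ℝ) := by
    rw [integral_indicator measurableSet_Icc, setIntegral_const, Real.volume_real_Icc]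
    norm_num
  have hfinal : ∫ η : ℝ × ℝ, G η ≤ -(1/1440 : ℝ) := by
    rw [hFub]
    calc ∫ x, J x ≤ _ := hmono
      _ = -(1/1440 : ℝ) := hindval
  have : (∫ η : ℝ × ℝ, (η.2 * ψ₁ η.1 * ψ₂ η.2) * OmegaFn (100 + ν - η.1, ω - η.2))
      = ∫ η : ℝ × ℝ, G η := by
    congr 1
  rw [this]
  exact le_abs.mpr (Or.inr (by linarith))
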